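/- Fix τ ∈ K, char K = 0, let ω be the compositional inverse of x(1-x)^τ and y = 1/(1-(1+τ)ω). Then (1+τ)²·x·ω'(x) = τy - τ + (1+τ)ω as formal power series in K[[x]]. -/

import Mathlib

open PowerSeries Finset

variable {K : Type*} [Field K]

/-- The compositional inverse `ω(x) = ∑_{n≥1} (∏_{a=0}^{n-2}(nτ+a)/n!) x^n`
of `x(1-x)^τ`. -/
noncomputable def omegaSeries [CharZero K] (τ : K) : PowerSeries K :=
  PowerSeries.mk fun n =>
    if n = 0 then 0 else (∏ a ∈ Finset.range (n - 1), ((n : K) * τ + a)) / (n.factorial : K)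

noncomputable def rotheA (b : K) (n : ℕ) (a : K) : K :=
  if n = 0 then 1 else
    a * (∏ i ∈ range (n - 1), (a + (n : K) * b - ((i : K) + 1))) / (n.factorial : K)

@[simp] lemma rotheA_zero (b a : K) : rotheA b 0 a = 1 := rfl

@[simp] lemma rotheA_one (b a : K) : rotheA b 1 a = a := by
  simp [rotheA]

lemma rotheA_eq (b : K) {n : ℕ} (hn : n ≠ 0) (a : K) :
    rotheA b n a
      = a * (∏ i ∈ range (n - 1), (a + (n : K) * b - ((i : K) + 1))) / (n.factorial : K) := by
  simp [rotheA, hn]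

lemma rotheA_zero_left (b : K) {n : ℕ} (hn : n ≠ 0) : rotheA b n 0 = 0 := by
  simp [rotheA_eq b hn]

noncomputable def rotheP (b : K) (n : ℕ) : Polynomial K :=
  if n = 0 then 1 else
    Polynomial.C ((n.factorial : K))⁻¹ * (Polynomial.X *
      ∏ i ∈ range (n - 1), (Polynomial.X + Polynomial.C ((n : K) * b - ((i : K) + 1))))

lemma rotheP_eval (b : K) (n : ℕ) (a : K) : (rotheP b n).eval a = rotheA b n a := by
  rcases eq_or_ne n 0 with rfl | hn
  · simp [rotheP, rotheA]
  · simp only [rotheP, rotheA, if_neg hn, Polynomial.eval_mul, Polynomial.eval_C,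
      Polynomial.eval_X, Polynomial.eval_prod, Polynomial.eval_add]
    rw [div_eq_mul_inv]
    ring_nf

/-- Coefficients of `omegaSeries` are (negated) Rothe numbers. -/
lemma omegaSeries_coeff [CharZero K] (τ : K) {n : ℕ} (hn : n ≠ 0) :
    (PowerSeries.coeff n) (omegaSeries τ) = -rotheA (1 + τ) n (-1) := by
  rw [omegaSeries, coeff_mk, if_neg hn, rotheA_eq _ hn]
  rw [show ∀ x y : K, -(-1 * x / y) = x / y from fun x y => by ring]
  congr 1
  rw [← Finset.prod_range_reflect (fun a => (n : K) * τ + (a : K)) (n - 1)]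
  refine prod_congr rfl fun i hi => ?_
  have hi' : i < n - 1 := mem_range.mp hi
  have h1 : n - 1 - 1 - i = n - (2 + i) := by omega
  have h2 : 2 + i ≤ n := by omega
  rw [h1, Nat.cast_sub h2]
  push_cast
  ring

@[simp] lemma omegaSeries_coeff_zero [CharZero K] (τ : K) :
    (PowerSeries.coeff 0) (omegaSeries τ) = 0 := by
  rw [omegaSeries, coeff_mk]; simp

/-- Pascal-type recurrence for Rothe polynomials. -/
lemma rotheA_pascal [CharZero K] (b : K) {n : ℕ} (hn : n ≠ 0) (a : K) :
    rotheA b n (a + 1) = rotheA b n a + rotheA b (n - 1) (a + b) := by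
  obtain ⟨m, rfl⟩ := Nat.exists_eq_succ_of_ne_zero hn
  match m with
  | 0 => simp
  | m + 1 =>
    have hfac : ((m + 2).factorial : K) ≠ 0 := Nat.cast_ne_zero.mpr (Nat.factorial_ne_zero _)
    have hfac1 : ((m + 1).factorial : K) ≠ 0 := Nat.cast_ne_zero.mpr (Nat.factorial_ne_zero _)
    have h1 : rotheA b (m + 2) (a + 1)
        = (a + 1) * ((∏ i ∈ range m, (a + ((m : K) + 2) * b - ((i : K) + 1)))
            * (a + ((m : K) + 2) * b)) / ((m + 2).factorial : K) := by
      rw [rotheA_eq b (by omega)]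
      rw [show (m + 2) - 1 = m + 1 from rfl, prod_range_succ']
      congr 3
      · refine prod_congr rfl fun i _ => ?_
        push_cast; try ring
      · push_cast; try ring
    have h2 : rotheA b (m + 2) a
        = a * ((∏ i ∈ range m, (a + ((m : K) + 2) * b - ((i : K) + 1)))
            * (a + ((m : K) + 2) * b - ((m : K) + 1))) / ((m + 2).factorial : K) := by
      rw [rotheA_eq b (by omega)]
      rw [show (m + 2) - 1 = m + 1 from rfl, prod_range_succ]
      congr 3
      · refine prod_congr rfl fun i _ => ?_
        push_cast; try ring
      · push_cast; try ring
    have h3 : rotheA b (m + 2 - 1) (a + b)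
        = (a + b) * (∏ i ∈ range m, (a + ((m : K) + 2) * b - ((i : K) + 1)))
            / ((m + 1).factorial : K) := by
      rw [show (m + 2 - 1) = m + 1 from rfl, rotheA_eq b (by omega)]
      rw [show (m + 1) - 1 = m from rfl]
      congr 2
      refine prod_congr rfl fun i _ => ?_
      push_cast; try ring
    rw [h1, h2, h3]
    set P := ∏ i ∈ range m, (a + ((m : K) + 2) * b - ((i : K) + 1)) with hP
    have hff : ((m + 2).factorial : K) = ((m : K) + 2) * ((m + 1).factorial : K) := by
      rw [Nat.factorial_succ]; push_cast; ring
    rw [hff]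
    have h2ne : ((m : K) + 2) ≠ 0 := by
      have : ((m : K) + 2) = ((m + 2 : ℕ) : K) := by push_cast; ring
      rw [this]; exact Nat.cast_ne_zero.mpr (by omega)
    field_simp
    ring

/-- Rothe–Hagen convolution identity. -/
lemma rothe_conv [CharZero K] (b : K) :
    ∀ n : ℕ, ∀ a c : K,
      ∑ k ∈ range (n + 1), rotheA b k a * rotheA b (n - k) c = rotheA b n (a + c) := by
  intro n
  induction n with
  | zero => intro a c; simp
  | succ n IH =>
    intro a c
    set g : K → K := fun x =>
      (∑ k ∈ range (n + 2), rotheA b k x * rotheA b (n + 1 - k) c)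
        - rotheA b (n + 1) (x + c) with hg
    suffices hgz : ∀ x : K, g x = 0 by
      have := hgz a
      simp only [hg] at this
      exact sub_eq_zero.mp this
    have hstep : ∀ x : K, g (x + 1) = g x := by
      intro x
      have hsum : ∑ k ∈ range (n + 2), rotheA b k (x + 1) * rotheA b (n + 1 - k) c
          = (∑ k ∈ range (n + 2), rotheA b k x * rotheA b (n + 1 - k) c)
            + ∑ k ∈ range (n + 1), rotheA b k (x + b) * rotheA b (n - k) c := by
        rw [Finset.sum_range_succ' (fun k => rotheA b k (x + 1) * rotheA b (n + 1 - k) c) (n + 1)]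
        rw [Finset.sum_range_succ' (fun k => rotheA b k x * rotheA b (n + 1 - k) c) (n + 1)]
        simp only [Nat.succ_sub_succ_eq_sub, rotheA_zero, one_mul]
        have : ∀ k ∈ range (n + 1),
            rotheA b (k + 1) (x + 1) * rotheA b (n - k) c
              = rotheA b (k + 1) x * rotheA b (n - k) c
                + rotheA b k (x + b) * rotheA b (n - k) c := by
          intro k _
          rw [rotheA_pascal b (Nat.succ_ne_zero k) x]
          simp [add_mul]
        rw [Finset.sum_congr rfl this, Finset.sum_add_distrib]
        ring
      have hpas : rotheA b (n + 1) (x + 1 + c)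
          = rotheA b (n + 1) (x + c) + rotheA b n (x + c + b) := by
        have := rotheA_pascal b (Nat.succ_ne_zero n) (x + c)
        simpa [add_right_comm] using this
      simp only [hg, hsum, IH (x + b) c, hpas]
      rw [show x + b + c = x + c + b by ring]
      ring
    have hzero : g 0 = 0 := by
      simp only [hg]
      rw [Finset.sum_eq_single 0]
      · simp
      · intro k _ hk
        rw [rotheA_zero_left b hk, zero_mul]
      · intro h; simp at h
    have hnat : ∀ m : ℕ, g (m : K) = 0 := by
      intro m
      induction m with
      | zero => simpa using hzero
      | succ m ih =>
        have := hstep (m : K)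
        push_cast
        rw [this, ih]
    obtain ⟨p, hp⟩ : ∃ p : Polynomial K, ∀ x, p.eval x = g x := by
      refine ⟨(∑ k ∈ range (n + 2), rotheP b k * Polynomial.C (rotheA b (n + 1 - k) c))
        - (rotheP b (n + 1)).comp (Polynomial.X + Polynomial.C c), fun x => ?_⟩
      simp [Polynomial.eval_finset_sum, rotheP_eval, Polynomial.eval_comp, hg]
    have hp0 : p = 0 := by
      refine Polynomial.eq_zero_of_infinite_isRoot p ?_
      apply Set.infinite_of_injective_forall_mem (f := fun m : ℕ => (m : K))
        Nat.cast_injective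
      intro m
      simp only [Set.mem_setOf_eq, Polynomial.IsRoot, hp, hnat]
    intro x
    rw [← hp, hp0, Polynomial.eval_zero]

/-- The key coefficient identity. -/
lemma key_coeff [CharZero K] (b : K) (m : ℕ) :
    ∑ k ∈ range (m + 1),
        (b * ((k : K) + 1) - 1) * (-rotheA b (k + 1) (-1)) * (-rotheA b (m + 1 - k) (-1))
      = ((m : K) + 1) * (-rotheA b (m + 2) (-1)) := by
  set w : ℕ → K := fun j => -rotheA b j (-1) with hw
  set S : K := ∑ k ∈ range (m + 1), w (k + 1) * w (m + 1 - k) with hS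
  set L : K := ∑ k ∈ range (m + 1), (b * ((k : K) + 1) - 1) * w (k + 1) * w (m + 1 - k) with hL
  have hrefl : L = ∑ k ∈ range (m + 1),
      (b * (((m + 1 - k : ℕ) : K)) - 1) * w (m + 1 - k) * w (k + 1) := by
    rw [hL, ← Finset.sum_range_reflect]
    refine Finset.sum_congr rfl fun k hk => ?_
    have hk' : k ≤ m := by simpa [Nat.lt_succ_iff] using hk
    have e1 : m + 1 - 1 - k + 1 = m + 1 - k := by omega
    have e2 : m + 1 - (m + 1 - 1 - k) = k + 1 := by omega
    have e3 : ((m + 1 - 1 - k : ℕ) : K) + 1 = ((m + 1 - k : ℕ) : K) := by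
      have : (m + 1 - 1 - k) + 1 = m + 1 - k := by omega
      rw [← this]; push_cast; ring
    rw [e1, e2, e3]
  have hsym : L + L = (b * ((m : K) + 2) - 2) * S := by
    nth_rewrite 2 [hrefl]
    rw [hL, hS, ← Finset.sum_add_distrib, Finset.mul_sum]
    refine Finset.sum_congr rfl fun k hk => ?_
    have hk' : k ≤ m := by simpa [Nat.lt_succ_iff] using hk
    have e : ((m + 1 - k : ℕ) : K) = (m : K) + 1 - (k : K) := by
      have : ((m + 1 - k : ℕ) : K) = ((m + 1 : ℕ) : K) - (k : K) :=
        Nat.cast_sub (by omega)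
      rw [this]; push_cast; ring
    rw [e]
    ring
  have hS2 : S = rotheA b (m + 2) (-2) + 2 * w (m + 2) := by
    have h := rothe_conv b (m + 2) (-1 : K) (-1 : K)
    rw [show ((-1 : K) + -1) = -2 by ring] at h
    rw [Finset.sum_range_succ, Finset.sum_range_succ'] at h
    simp only [Nat.succ_sub_succ_eq_sub, Nat.sub_self, Nat.sub_zero, rotheA_zero,
      one_mul, mul_one] at h
    have hmid : ∑ k ∈ range (m + 1), rotheA b (k + 1) (-1) * rotheA b (m + 1 - k) (-1) = S := by
      rw [hS]
      refine Finset.sum_congr rfl fun k hk => ?_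
      simp only [hw]
      ring
    rw [hmid] at h
    simp only [hw]
    linear_combination h
  set R : K := ∏ i ∈ range m, (((m : K) + 2) * b - ((i : K) + 3)) with hR
  have hfac : ((m + 2).factorial : K) ≠ 0 := Nat.cast_ne_zero.mpr (Nat.factorial_ne_zero _)
  have hA2 : rotheA b (m + 2) (-2)
      = -2 * (R * (((m : K) + 2) * b - ((m : K) + 3))) / ((m + 2).factorial : K) := by
    rw [hR, rotheA_eq b (by omega), show (m + 2) - 1 = m + 1 from rfl]
    have hprod : ∏ i ∈ range (m + 1), ((-2 : K) + ((m + 2 : ℕ) : K) * b - ((i : K) + 1))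
        = ∏ i ∈ range (m + 1), (((m : K) + 2) * b - ((i : K) + 3)) :=
      prod_congr rfl fun i _ => by push_cast; try ring
    rw [hprod, prod_range_succ]
    try ring
  have hA1 : w (m + 2)
      = (((m : K) + 2) * b - 2) * R / ((m + 2).factorial : K) := by
    simp only [hw, hR]
    rw [rotheA_eq b (by omega), show (m + 2) - 1 = m + 1 from rfl]
    have hprod : ∏ i ∈ range (m + 1), ((-1 : K) + ((m + 2 : ℕ) : K) * b - ((i : K) + 1))
        = ∏ i ∈ range (m + 1), (((m : K) + 2) * b - ((i : K) + 2)) :=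
      prod_congr rfl fun i _ => by push_cast; try ring
    rw [hprod, prod_range_succ']
    have hshift : ∏ i ∈ range m, (((m : K) + 2) * b - (((i + 1 : ℕ) : K) + 2))
        = ∏ i ∈ range m, (((m : K) + 2) * b - ((i : K) + 3)) :=
      prod_congr rfl fun i _ => by push_cast; try ring
    rw [hshift]
    push_cast
    try ring
  have hclosed : (b * ((m : K) + 2) - 2) * rotheA b (m + 2) (-2)
      = -2 * (b * ((m : K) + 2) - ((m : K) + 2) - 1) * w (m + 2) := by
    rw [hA2, hA1, ← mul_div_assoc, ← mul_div_assoc, div_eq_div_iff hfac hfac]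
    ring
  have h2 : (2 : K) ≠ 0 := two_ne_zero
  have hfin : L + L = (((m : K) + 1) * w (m + 2)) + (((m : K) + 1) * w (m + 2)) := by
    rw [hsym, hS2]
    linear_combination hclosed
  have := mul_left_cancel₀ h2 (by linear_combination hfin :
    (2 : K) * L = 2 * (((m : K) + 1) * w (m + 2)))
  simpa [hL, hw] using this

/-- The functional (differential) equation for `ω`:  `x·ω'·(1-(1+τ)ω) = ω - ω²`. -/
lemma omega_ode [CharZero K] (τ : K) :
    (PowerSeries.X * PowerSeries.derivativeFun (omegaSeries τ))
        * (1 - PowerSeries.C (1 + τ) * omegaSeries τ)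
      = omegaSeries τ - omegaSeries τ ^ 2 := by
  set b : K := 1 + τ with hb
  set W := omegaSeries τ with hW
  have hw0 : (coeff 0) W = 0 := omegaSeries_coeff_zero τ
  have hXd : ∀ n : ℕ, (coeff n) (X * derivativeFun W) = (n : K) * (coeff n) W := by
    intro n
    cases n with
    | zero =>
      simp [PowerSeries.coeff_zero_eq_constantCoeff, hw0]
    | succ n =>
      rw [PowerSeries.coeff_succ_X_mul, show (coeff n) W.derivativeFun = coeff (n + 1) W * (n + 1) from
        PowerSeries.coeff_derivative W n]
      push_cast
      ring
  ext n
  rw [mul_sub, mul_one, map_sub, map_sub, sq, hXd n, PowerSeries.coeff_mul,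
    PowerSeries.coeff_mul, Finset.Nat.sum_antidiagonal_eq_sum_range_succ_mk,
    Finset.Nat.sum_antidiagonal_eq_sum_range_succ_mk]
  have hterm : ∀ k, (coeff k) (X * derivativeFun W) * (coeff (n - k)) (C b * W)
      = b * ((k : K) * (coeff k) W * (coeff (n - k)) W) := by
    intro k
    rw [hXd, PowerSeries.coeff_C_mul]
    ring
  rw [Finset.sum_congr rfl fun k _ => hterm k]
  match n with
  | 0 => simp [hw0]
  | 1 => simp [Finset.sum_range_succ, hw0]
  | (m + 2) =>
    have hcoe : ∀ j : ℕ, j ≠ 0 → (coeff j) W = -rotheA b j (-1) := by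
      intro j hj
      rw [hW, hb]
      exact omegaSeries_coeff τ hj
    have e1 : ∑ k ∈ range (m + 2 + 1), b * ((k : K) * (coeff k) W * (coeff (m + 2 - k)) W)
        = ∑ k ∈ range (m + 1),
            b * (((k : K) + 1) * (coeff (k + 1)) W * (coeff (m + 1 - k)) W) := by
      rw [Finset.sum_range_succ, Finset.sum_range_succ']
      simp only [Nat.succ_sub_succ_eq_sub, Nat.sub_self, Nat.cast_zero, hw0,
        mul_zero, zero_mul, add_zero, zero_add]
      refine Finset.sum_congr rfl fun k _ => ?_
      push_cast
      ring
    have e2 : ∑ k ∈ range (m + 2 + 1), (coeff k) W * (coeff (m + 2 - k)) W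
        = ∑ k ∈ range (m + 1), (coeff (k + 1)) W * (coeff (m + 1 - k)) W := by
      rw [Finset.sum_range_succ, Finset.sum_range_succ']
      simp only [Nat.succ_sub_succ_eq_sub, Nat.sub_self, hw0, mul_zero, zero_mul,
        add_zero, zero_add]
    rw [e1, e2]
    have hkey := key_coeff b m
    have hs1 : ∑ k ∈ range (m + 1),
        b * (((k : K) + 1) * (coeff (k + 1)) W * (coeff (m + 1 - k)) W)
        = ∑ k ∈ range (m + 1),
          b * (((k : K) + 1) * (-rotheA b (k + 1) (-1)) * (-rotheA b (m + 1 - k) (-1))) := by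
      refine Finset.sum_congr rfl fun k hk => ?_
      have hk' : k ≤ m := by simpa [Nat.lt_succ_iff] using hk
      rw [hcoe (k + 1) (Nat.succ_ne_zero k), hcoe (m + 1 - k) (by omega)]
    have hs2 : ∑ k ∈ range (m + 1), (coeff (k + 1)) W * (coeff (m + 1 - k)) W
        = ∑ k ∈ range (m + 1), (-rotheA b (k + 1) (-1)) * (-rotheA b (m + 1 - k) (-1)) := by
      refine Finset.sum_congr rfl fun k hk => ?_
      have hk' : k ≤ m := by simpa [Nat.lt_succ_iff] using hk
      rw [hcoe (k + 1) (Nat.succ_ne_zero k), hcoe (m + 1 - k) (by omega)]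
    have hwn : (coeff (m + 2)) W = -rotheA b (m + 2) (-1) := hcoe (m + 2) (by omega)
    rw [hs1, hs2, hwn]
    have expand : ∑ k ∈ range (m + 1),
          b * (((k : K) + 1) * (-rotheA b (k + 1) (-1)) * (-rotheA b (m + 1 - k) (-1)))
        - ∑ k ∈ range (m + 1), (-rotheA b (k + 1) (-1)) * (-rotheA b (m + 1 - k) (-1))
        = ∑ k ∈ range (m + 1),
          (b * ((k : K) + 1) - 1) * (-rotheA b (k + 1) (-1)) * (-rotheA b (m + 1 - k) (-1)) := by
      rw [← Finset.sum_sub_distrib]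
      refine Finset.sum_congr rfl fun k _ => ?_
      ring
    push_cast
    linear_combination - hkey - expand


/-- With `y = 1/(1-(1+τ)ω)`, one has `(1+τ)²·x·ω'(x) = τy - τ + (1+τ)ω`. -/
theorem sq_one_add_tau_x_deriv_omega [CharZero K] (τ : K) :
    PowerSeries.C ((1 + τ) ^ 2) *
        (PowerSeries.X * PowerSeries.derivativeFun (omegaSeries τ))
      = PowerSeries.C τ * (1 - PowerSeries.C (1 + τ) * omegaSeries τ)⁻¹
          - PowerSeries.C τ + PowerSeries.C (1 + τ) * omegaSeries τ := by
  set W := omegaSeries τ with hW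
  set u : PowerSeries K := 1 - C (1 + τ) * W with hu
  have h0 : constantCoeff (omegaSeries τ) = 0 := by
    rw [← PowerSeries.coeff_zero_eq_constantCoeff]
    exact omegaSeries_coeff_zero τ
  have hconst : constantCoeff u = 1 := by
    simp [hu, hW, h0]
  have hne : constantCoeff u ≠ 0 := by rw [hconst]; exact one_ne_zero
  have hinv : u⁻¹ * u = 1 := PowerSeries.inv_mul_cancel _ hne
  have hunz : u ≠ 0 := by
    intro h
    rw [h, map_zero] at hconst
    exact zero_ne_one hconst
  apply mul_right_cancel₀ hunz
  have hode : (X * derivativeFun W) * u = W - W ^ 2 := omega_ode τ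
  calc C ((1 + τ) ^ 2) * (X * derivativeFun W) * u
      = C ((1 + τ) ^ 2) * ((X * derivativeFun W) * u) := by ring
    _ = C ((1 + τ) ^ 2) * (W - W ^ 2) := by rw [hode]
    _ = (C τ * u⁻¹ - C τ + C (1 + τ) * W) * u := by
        have hC2 : C ((1 + τ) ^ 2) = (1 + C τ) ^ 2 := by
          rw [map_pow, map_add, map_one]
        have hC1 : C (1 + τ) = 1 + C τ := by
          rw [map_add, map_one]
        rw [hC2, add_mul, sub_mul, mul_assoc (C τ) u⁻¹ u, hinv, mul_one, hu, hC1]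
        ring
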